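/- Let G_u be the disjoint union of graphs G_v and G_w, let I be an independent set of G_u, and let ℓ ≤ |I|. If (x, y) is the unique maximum ℓ-stable tuple, then RIS_ℓ(G_u, I) = RIS_x(G_v, I ∩ V(G_v)) + RIS_y(G_w, I ∩ V(G_w)). -/

import Mathlib

open Finset

variable {V : Type*}

/-- `I` is an independent set of `G`. -/
def IsIndep (G : SimpleGraph V) (I : Finset V) : Prop :=
  ∀ u ∈ I, ∀ v ∈ I, ¬ G.Adj u v

/-- One token addition or removal between independent sets of size at least `k`. -/
def TarStep [DecidableEq V] (G : SimpleGraph V) (k : ℕ) (I J : Finset V) : Prop :=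
  IsIndep G I ∧ IsIndep G J ∧ k ≤ I.card ∧ k ≤ J.card ∧
    ∃ v : V, J = insert v I ∨ I = insert v J

/-- TAR-reachability with token lower bound `k`. -/
def TarReach [DecidableEq V] (G : SimpleGraph V) (k : ℕ) (I J : Finset V) : Prop :=
  Relation.ReflTransGen (TarStep G k) I J

/-- TAR-reachability inside the subgraph of `G` induced by `S`. -/
def TarReachOn [DecidableEq V] (G : SimpleGraph V) (S : Finset V) (k : ℕ)
    (I J : Finset V) : Prop :=
  Relation.ReflTransGen (fun I J => I ⊆ S ∧ J ⊆ S ∧ TarStep G k I J) I J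

/-- The maximum size of an independent set of `G` that is TAR_k-reachable from `I`. -/
noncomputable def RIS [DecidableEq V] (G : SimpleGraph V) (k : ℕ) (I : Finset V) : ℕ :=
  sSup {m | ∃ J : Finset V, TarReach G k I J ∧ J.card = m}

/-- The maximum size of an independent set TAR_k-reachable from `I` inside the
subgraph of `G` induced by `S`. -/
noncomputable def RISOn [DecidableEq V] (G : SimpleGraph V) (S : Finset V) (k : ℕ)
    (I : Finset V) : ℕ :=
  sSup {m | ∃ J : Finset V, TarReachOn G S k I J ∧ J.card = m}

/-- `(x, y)` is an `ℓ`-stable tuple for the independent set `I` of the disjoint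
union of the subgraphs induced by `S` and `Sᶜ`. -/
def StableTuple [Fintype V] [DecidableEq V] (G : SimpleGraph V) (S : Finset V)
    (I : Finset V) (ℓ x y : ℕ) : Prop :=
  x ≤ (I ∩ S).card ∧ y ≤ (I ∩ Sᶜ).card ∧
  x = max 0 (ℓ - RISOn G Sᶜ y (I ∩ Sᶜ)) ∧ y = max 0 (ℓ - RISOn G S x (I ∩ S))

section AuxLemmas

variable [Fintype V] [DecidableEq V] {G : SimpleGraph V}

lemma isIndep_subset {I J : Finset V} (h : IsIndep G I) (hJ : J ⊆ I) : IsIndep G J :=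
  fun u hu v hv => h u (hJ hu) v (hJ hv)

lemma tarStep_symm {k : ℕ} {I J : Finset V} (h : TarStep G k I J) : TarStep G k J I := by
  obtain ⟨h1, h2, h3, h4, v, h5⟩ := h
  exact ⟨h2, h1, h4, h3, v, h5.symm⟩

lemma tarStep_mono {k k' : ℕ} (hk : k' ≤ k) {I J : Finset V} (h : TarStep G k I J) :
    TarStep G k' I J :=
  ⟨h.1, h.2.1, hk.trans h.2.2.1, hk.trans h.2.2.2.1, h.2.2.2.2⟩

lemma tarReachOn_symm {S : Finset V} {k : ℕ} {I J : Finset V}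
    (h : TarReachOn G S k I J) : TarReachOn G S k J I :=
  by
    haveI : Std.Symm (fun I J : Finset V => I ⊆ S ∧ J ⊆ S ∧ TarStep G k I J) :=
      ⟨fun _ _ hAB => ⟨hAB.2.1, hAB.1, tarStep_symm hAB.2.2⟩⟩
    exact Relation.ReflTransGen.symmetric.symm _ _ h

lemma tarReachOn_mono {S : Finset V} {k k' : ℕ} (hk : k' ≤ k) {I J : Finset V}
    (h : TarReachOn G S k I J) : TarReachOn G S k' I J :=
  Relation.ReflTransGen.mono (fun _ _ hAB => ⟨hAB.1, hAB.2.1, tarStep_mono hk hAB.2.2⟩) _ _ h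

lemma bdd_of_card (P : Finset V → Prop) :
    BddAbove {m | ∃ J : Finset V, P J ∧ J.card = m} := by
  refine ⟨(Finset.univ : Finset V).card, ?_⟩
  rintro m ⟨J, -, rfl⟩
  exact Finset.card_le_univ J

lemma le_RISOn {S : Finset V} {k : ℕ} {I J : Finset V} (h : TarReachOn G S k I J) :
    J.card ≤ RISOn G S k I :=
  le_csSup (bdd_of_card _) ⟨J, h, rfl⟩

lemma card_le_RISOn (S : Finset V) (k : ℕ) (I : Finset V) : I.card ≤ RISOn G S k I :=
  le_RISOn Relation.ReflTransGen.refl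

lemma exists_RISOn (S : Finset V) (k : ℕ) (I : Finset V) :
    ∃ J : Finset V, TarReachOn G S k I J ∧ J.card = RISOn G S k I := by
  have h := Nat.sSup_mem (s := {m | ∃ J : Finset V, TarReachOn G S k I J ∧ J.card = m})
    ⟨I.card, I, Relation.ReflTransGen.refl, rfl⟩ (bdd_of_card _)
  exact h

lemma RISOn_anti {S I : Finset V} {k k' : ℕ} (hk : k' ≤ k) :
    RISOn G S k I ≤ RISOn G S k' I := by
  obtain ⟨J, hJ, hc⟩ := exists_RISOn (G := G) S k I
  exact hc ▸ le_RISOn (tarReachOn_mono hk hJ)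

lemma indep_of_tarReachOn {S : Finset V} {k : ℕ} {I J : Finset V} (hI : IsIndep G I)
    (h : TarReachOn G S k I J) : IsIndep G J := by
  induction h with
  | refl => exact hI
  | tail _ hstep _ => exact hstep.2.2.2.1

lemma subset_of_tarReachOn {S : Finset V} {k : ℕ} {I J : Finset V} (hI : I ⊆ S)
    (h : TarReachOn G S k I J) : J ⊆ S := by
  induction h with
  | refl => exact hI
  | tail _ hstep _ => exact hstep.2.1

lemma card_inter_compl (K S : Finset V) : (K ∩ S).card + (K ∩ Sᶜ).card = K.card := by
  rw [← Finset.card_union_of_disjoint]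
  · congr 1
    ext a
    simp only [Finset.mem_union, Finset.mem_inter, Finset.mem_compl]
    tauto
  · rw [Finset.disjoint_left]
    intro a ha hb
    simp only [Finset.mem_inter, Finset.mem_compl] at ha hb
    exact hb.2 ha.2

lemma inter_union_inter_compl (K S : Finset V) : (K ∩ S) ∪ (K ∩ Sᶜ) = K := by
  ext a
  simp only [Finset.mem_union, Finset.mem_inter, Finset.mem_compl]
  tauto

/-- Lifting a TAR walk inside `S` to a TAR walk in `G`, with a fixed independent
set `B ⊆ Sᶜ` on the other side. -/
lemma lift_walk {S : Finset V} (hsep : ∀ a ∈ S, ∀ b ∉ S, ¬ G.Adj a b)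
    {k ℓ : ℕ} {A A' B : Finset V} (hB : B ⊆ Sᶜ) (hBind : IsIndep G B)
    (hcard : ℓ ≤ k + B.card) (h : TarReachOn G S k A A') :
    TarReach G ℓ (A ∪ B) (A' ∪ B) := by
  induction h with
  | refl => exact Relation.ReflTransGen.refl
  | tail _ hstep ih =>
    refine ih.tail ?_
    obtain ⟨hA1S, hA2S, h1, h2, h3, h4, v, hv⟩ := hstep
    have hdisj : ∀ {C : Finset V}, C ⊆ S → Disjoint C B := fun {C} hC =>
      Finset.disjoint_left.2 fun a haC haB => (Finset.mem_compl.1 (hB haB)) (hC haC)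
    have hind : ∀ {C : Finset V}, C ⊆ S → IsIndep G C → IsIndep G (C ∪ B) := by
      intro C hCS hCind u hu w hw
      rcases Finset.mem_union.1 hu with hu' | hu' <;> rcases Finset.mem_union.1 hw with hw' | hw'
      · exact hCind u hu' w hw'
      · exact hsep u (hCS hu') w (Finset.mem_compl.1 (hB hw'))
      · exact fun hadj => hsep w (hCS hw') u (Finset.mem_compl.1 (hB hu')) hadj.symm
      · exact hBind u hu' w hw'
    refine ⟨hind hA1S h1, hind hA2S h2, ?_, ?_, v, ?_⟩
    · rw [Finset.card_union_of_disjoint (hdisj hA1S)]; omega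
    · rw [Finset.card_union_of_disjoint (hdisj hA2S)]; omega
    · rcases hv with hv | hv
      · left; rw [hv, Finset.insert_union]
      · right; rw [hv, Finset.insert_union]

/-- The projections of a TAR_ℓ walk in the disjoint union are TAR walks with the
thresholds given by a stable tuple. -/
lemma upper_invariant {S : Finset V} (I : Finset V) {ℓ x y : ℕ}
    (hx : x = ℓ - RISOn G Sᶜ y (I ∩ Sᶜ)) (hy : y = ℓ - RISOn G S x (I ∩ S))
    {J : Finset V} (h : TarReach G ℓ I J) :
    TarReachOn G S x (I ∩ S) (J ∩ S) ∧ TarReachOn G Sᶜ y (I ∩ Sᶜ) (J ∩ Sᶜ) := by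
  induction h with
  | refl => exact ⟨Relation.ReflTransGen.refl, Relation.ReflTransGen.refl⟩
  | @tail b c _ hstep ih =>
    obtain ⟨h1, h2, h3, h4, v, hv⟩ := hstep
    have hbw : (b ∩ Sᶜ).card ≤ RISOn G Sᶜ y (I ∩ Sᶜ) := le_RISOn ih.2
    have hbv : (b ∩ S).card ≤ RISOn G S x (I ∩ S) := le_RISOn ih.1
    have hcb := card_inter_compl b S
    have hcc := card_inter_compl c S
    by_cases hvS : v ∈ S
    · have hv' : v ∉ Sᶜ := by simp [hvS]
      have hceq : c ∩ Sᶜ = b ∩ Sᶜ := by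
        rcases hv with hv | hv
        · rw [hv, Finset.insert_inter_of_notMem hv']
        · rw [hv, Finset.insert_inter_of_notMem hv']
      have hceqc : (c ∩ Sᶜ).card = (b ∩ Sᶜ).card := by rw [hceq]
      refine ⟨ih.1.tail ⟨Finset.inter_subset_right, Finset.inter_subset_right,
        isIndep_subset h1 Finset.inter_subset_left,
        isIndep_subset h2 Finset.inter_subset_left, by omega, by omega, v, ?_⟩,
        by rw [hceq]; exact ih.2⟩
      rcases hv with hv | hv
      · left; rw [hv, Finset.insert_inter_of_mem hvS]
      · right; rw [hv, Finset.insert_inter_of_mem hvS]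
    · have hv' : v ∈ Sᶜ := Finset.mem_compl.2 hvS
      have hceq : c ∩ S = b ∩ S := by
        rcases hv with hv | hv
        · rw [hv, Finset.insert_inter_of_notMem hvS]
        · rw [hv, Finset.insert_inter_of_notMem hvS]
      have hceqc : (c ∩ S).card = (b ∩ S).card := by rw [hceq]
      refine ⟨by rw [hceq]; exact ih.1,
        ih.2.tail ⟨Finset.inter_subset_right, Finset.inter_subset_right,
        isIndep_subset h1 Finset.inter_subset_left,
        isIndep_subset h2 Finset.inter_subset_left, by omega, by omega, v, ?_⟩⟩
      rcases hv with hv | hv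
      · left; rw [hv, Finset.insert_inter_of_mem hv']
      · right; rw [hv, Finset.insert_inter_of_mem hv']

end AuxLemmas

/-- The downward iteration converging to the maximum stable tuple. -/
noncomputable def iterTuple [Fintype V] [DecidableEq V] (G : SimpleGraph V)
    (S I : Finset V) (ℓ : ℕ) : ℕ → ℕ × ℕ
  | 0 => ((I ∩ S).card, (I ∩ Sᶜ).card)
  | n + 1 =>
      (ℓ - RISOn G Sᶜ (iterTuple G S I ℓ n).2 (I ∩ Sᶜ),
       ℓ - RISOn G S (iterTuple G S I ℓ n).1 (I ∩ S))

/-- For a disjoint union, `RIS` at the union node is determined by the maximum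
`ℓ`-stable tuple `(x, y)`. -/
theorem ris_union [Fintype V] [DecidableEq V] (G : SimpleGraph V)
    (S : Finset V) (hsep : ∀ a ∈ S, ∀ b ∉ S, ¬ G.Adj a b)
    (I : Finset V) (hI : IsIndep G I) (ℓ : ℕ) (hℓ : ℓ ≤ I.card) (x y : ℕ)
    (hstable : StableTuple G S I ℓ x y)
    (hmax : ∀ x' y' : ℕ, StableTuple G S I ℓ x' y' → x' ≤ x ∧ y' ≤ y) :
    RIS G ℓ I = RISOn G S x (I ∩ S) + RISOn G Sᶜ y (I ∩ Sᶜ) := by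
  have hsep' : ∀ a ∈ Sᶜ, ∀ b ∉ Sᶜ, ¬ G.Adj a b := by
    intro a ha b hb hadj
    exact hsep b (by simpa using hb) a (by simpa using ha) hadj.symm
  have hpart := card_inter_compl I S
  set p : ℕ → ℕ × ℕ := iterTuple G S I ℓ with hp
  have hp0 : p 0 = ((I ∩ S).card, (I ∩ Sᶜ).card) := rfl
  have hpS : ∀ n, p (n + 1) =
      (ℓ - RISOn G Sᶜ (p n).2 (I ∩ Sᶜ), ℓ - RISOn G S (p n).1 (I ∩ S)) := fun n => rfl
  have hp01 : (p 0).1 = (I ∩ S).card := rfl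
  have hp02 : (p 0).2 = (I ∩ Sᶜ).card := rfl
  have hp1 : ∀ n, (p (n + 1)).1 = ℓ - RISOn G Sᶜ (p n).2 (I ∩ Sᶜ) := fun n => rfl
  have hp2 : ∀ n, (p (n + 1)).2 = ℓ - RISOn G S (p n).1 (I ∩ S) := fun n => rfl
  -- the iteration is antitone
  have hanti : ∀ n, (p (n + 1)).1 ≤ (p n).1 ∧ (p (n + 1)).2 ≤ (p n).2 := by
    intro n
    induction n with
    | zero =>
      have h1 := card_le_RISOn (G := G) Sᶜ (I ∩ Sᶜ).card (I ∩ Sᶜ)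
      have h2 := card_le_RISOn (G := G) S (I ∩ S).card (I ∩ S)
      constructor
      · rw [hp1 0, hp02, hp01]; omega
      · rw [hp2 0, hp01, hp02]; omega
    | succ m ih =>
      have h1 : RISOn G Sᶜ (p m).2 (I ∩ Sᶜ) ≤ RISOn G Sᶜ (p (m + 1)).2 (I ∩ Sᶜ) :=
        RISOn_anti ih.2
      have h2 : RISOn G S (p m).1 (I ∩ S) ≤ RISOn G S (p (m + 1)).1 (I ∩ S) :=
        RISOn_anti ih.1
      constructor
      · rw [hp1 (m + 1), hp1 m]; omega
      · rw [hp2 (m + 1), hp2 m]; omega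
  have hcap : ∀ n, (p n).1 ≤ (I ∩ S).card ∧ (p n).2 ≤ (I ∩ Sᶜ).card := by
    intro n
    induction n with
    | zero => rw [hp0]; exact ⟨le_refl _, le_refl _⟩
    | succ m ih => exact ⟨(hanti m).1.trans ih.1, (hanti m).2.trans ih.2⟩
  have hxeq : x = ℓ - RISOn G Sᶜ y (I ∩ Sᶜ) := by
    have := hstable.2.2.1; rwa [Nat.zero_max] at this
  have hyeq : y = ℓ - RISOn G S x (I ∩ S) := by
    have := hstable.2.2.2; rwa [Nat.zero_max] at this
  -- the stable tuple is dominated by every iterate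
  have hdom : ∀ n, x ≤ (p n).1 ∧ y ≤ (p n).2 := by
    intro n
    induction n with
    | zero => rw [hp0]; exact ⟨hstable.1, hstable.2.1⟩
    | succ m ih =>
      have h1 : RISOn G Sᶜ (p m).2 (I ∩ Sᶜ) ≤ RISOn G Sᶜ y (I ∩ Sᶜ) := RISOn_anti ih.2
      have h2 : RISOn G S (p m).1 (I ∩ S) ≤ RISOn G S x (I ∩ S) := RISOn_anti ih.1
      constructor
      · rw [hp1 m]; omega
      · rw [hp2 m]; omega
  -- stabilization
  have hstab : ∃ N, p (N + 1) = p N := by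
    by_contra hcon
    push_neg at hcon
    have hlt : ∀ n, (p (n + 1)).1 + (p (n + 1)).2 < (p n).1 + (p n).2 := by
      intro n
      have h1 := hanti n
      have hne := hcon n
      have : (p (n + 1)).1 ≠ (p n).1 ∨ (p (n + 1)).2 ≠ (p n).2 := by
        by_contra h
        push_neg at h
        exact hne (Prod.ext h.1 h.2)
      omega
    have hsum : ∀ n, (p n).1 + (p n).2 + n ≤ (p 0).1 + (p 0).2 := by
      intro n
      induction n with
      | zero => omega
      | succ m ih => have := hlt m; omega
    have := hsum ((p 0).1 + (p 0).2 + 1)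
    omega
  obtain ⟨N, hN⟩ := hstab
  have hNx : (p N).1 = ℓ - RISOn G Sᶜ (p N).2 (I ∩ Sᶜ) := by
    conv_lhs => rw [← hN, hpS N]
  have hNy : (p N).2 = ℓ - RISOn G S (p N).1 (I ∩ S) := by
    conv_lhs => rw [← hN, hpS N]
  have hNstable : StableTuple G S I ℓ (p N).1 (p N).2 :=
    ⟨(hcap N).1, (hcap N).2, by rw [Nat.zero_max]; exact hNx, by rw [Nat.zero_max]; exact hNy⟩
  have hxy : (p N).1 = x ∧ (p N).2 = y := by
    have h1 := hmax _ _ hNstable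
    have h2 := hdom N
    exact ⟨le_antisymm h1.1 h2.1, le_antisymm h1.2 h2.2⟩
  have hIv : IsIndep G (I ∩ S) := isIndep_subset hI Finset.inter_subset_left
  have hIw : IsIndep G (I ∩ Sᶜ) := isIndep_subset hI Finset.inter_subset_left
  -- the reachability claim along the iteration
  have claim : ∀ n, ∃ A B : Finset V, A ⊆ S ∧ B ⊆ Sᶜ ∧
      TarReachOn G S (p n).1 (I ∩ S) A ∧ TarReachOn G Sᶜ (p n).2 (I ∩ Sᶜ) B ∧
      A.card = RISOn G S (p n).1 (I ∩ S) ∧ B.card = RISOn G Sᶜ (p n).2 (I ∩ Sᶜ) ∧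
      TarReach G ℓ I (A ∪ B) := by
    intro n
    induction n with
    | zero =>
      obtain ⟨A, hA, hAc⟩ := exists_RISOn (G := G) S (p 0).1 (I ∩ S)
      obtain ⟨B, hB, hBc⟩ := exists_RISOn (G := G) Sᶜ (p 0).2 (I ∩ Sᶜ)
      have hAS : A ⊆ S := subset_of_tarReachOn Finset.inter_subset_right hA
      have hBS : B ⊆ Sᶜ := subset_of_tarReachOn Finset.inter_subset_right hB
      have hAind : IsIndep G A := indep_of_tarReachOn hIv hA
      have hreach1 : TarReach G ℓ ((I ∩ S) ∪ (I ∩ Sᶜ)) (A ∪ (I ∩ Sᶜ)) := by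
        refine lift_walk hsep Finset.inter_subset_right hIw ?_ hA
        rw [hp0]; omega
      have hAcard : (I ∩ S).card ≤ A.card := by
        rw [hAc]; exact card_le_RISOn _ _ _
      have hreach2 : TarReach G ℓ ((I ∩ Sᶜ) ∪ A) (B ∪ A) := by
        refine lift_walk hsep' (by rwa [compl_compl]) hAind ?_ hB
        rw [hp0]; omega
      refine ⟨A, B, hAS, hBS, hA, hB, hAc, hBc, ?_⟩
      have hstart : (I ∩ S) ∪ (I ∩ Sᶜ) = I := inter_union_inter_compl I S
      rw [hstart, Finset.union_comm A (I ∩ Sᶜ)] at hreach1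
      rw [Finset.union_comm A B]
      exact hreach1.trans hreach2
    | succ n ih =>
      obtain ⟨A₀, B₀, hA₀S, hB₀S, hA₀r, hB₀r, hA₀c, hB₀c, hreach₀⟩ := ih
      obtain ⟨A, hA, hAc⟩ := exists_RISOn (G := G) S (p (n + 1)).1 (I ∩ S)
      obtain ⟨B, hB, hBc⟩ := exists_RISOn (G := G) Sᶜ (p (n + 1)).2 (I ∩ Sᶜ)
      have hAS : A ⊆ S := subset_of_tarReachOn Finset.inter_subset_right hA
      have hBS : B ⊆ Sᶜ := subset_of_tarReachOn Finset.inter_subset_right hB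
      have hAind : IsIndep G A := indep_of_tarReachOn hIv hA
      have hB₀ind : IsIndep G B₀ := indep_of_tarReachOn hIw hB₀r
      have hwalkA : TarReachOn G S (p (n + 1)).1 A₀ A :=
        (tarReachOn_mono (hanti n).1 (tarReachOn_symm hA₀r)).trans hA
      have hdef1 : (p (n + 1)).1 = ℓ - RISOn G Sᶜ (p n).2 (I ∩ Sᶜ) := by rw [hpS n]
      have hdef2 : (p (n + 1)).2 = ℓ - RISOn G S (p n).1 (I ∩ S) := by rw [hpS n]
      have hliftA : TarReach G ℓ (A₀ ∪ B₀) (A ∪ B₀) := by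
        refine lift_walk hsep hB₀S hB₀ind ?_ hwalkA
        omega
      have hwalkB : TarReachOn G Sᶜ (p (n + 1)).2 B₀ B :=
        (tarReachOn_mono (hanti n).2 (tarReachOn_symm hB₀r)).trans hB
      have hrvmono : RISOn G S (p n).1 (I ∩ S) ≤ RISOn G S (p (n + 1)).1 (I ∩ S) :=
        RISOn_anti (hanti n).1
      have hliftB : TarReach G ℓ (B₀ ∪ A) (B ∪ A) := by
        refine lift_walk hsep' (by rwa [compl_compl]) hAind ?_ hwalkB
        omega
      refine ⟨A, B, hAS, hBS, hA, hB, hAc, hBc, ?_⟩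
      rw [Finset.union_comm A B₀] at hliftA
      rw [Finset.union_comm A B]
      exact hreach₀.trans (hliftA.trans hliftB)
  obtain ⟨A, B, hAS, hBS, _, _, hAc, hBc, hreach⟩ := claim N
  apply le_antisymm
  · -- upper bound
    unfold RIS
    refine csSup_le ⟨I.card, I, Relation.ReflTransGen.refl, rfl⟩ ?_
    rintro m ⟨J, hJ, rfl⟩
    have hinv := upper_invariant (S := S) I hxeq hyeq hJ
    have h1 := le_RISOn hinv.1
    have h2 := le_RISOn hinv.2
    have h3 := card_inter_compl J S
    omega
  · -- lower bound
    unfold RIS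
    refine le_csSup (bdd_of_card _) ⟨A ∪ B, hreach, ?_⟩
    have hdisj : Disjoint A B := Finset.disjoint_left.2 fun a haA haB =>
      (Finset.mem_compl.1 (hBS haB)) (hAS haA)
    rw [Finset.card_union_of_disjoint hdisj, hAc, hBc, hxy.1, hxy.2]
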